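/- Let L be a linear order with a least element. Then: (i) for every ultrafilter U on Intalg L, letting C = {t ∈ L : [t,→) ∈ U} be its corresponding initial chain, (U,⊇) ≡_T (cf C × ci(L∖C), ≤) with the coordinatewise order; and (ii) for every initial chain C ⊆ L there is an ultrafilter U on Intalg L with (U,⊇) ≡_T (cf C × ci(L∖C), ≤). Hence the Tukey types of ultrafilters on Intalg L are exactly the products (κ×μ,≤) over pairs (κ,μ) = (cf C, ci(L∖C)) for initial chains C of L. -/

import Mathlib

open Cardinal
open scoped Classical

/-- A subset `X` of a preorder is cofinal if every element has an upper bound in `X`. -/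
def TCofinal {P : Type*} [Preorder P] (X : Set P) : Prop :=
  ∀ p : P, ∃ x ∈ X, p ≤ x

/-- A map is cofinal if it sends cofinal sets to cofinal sets. -/
def TCofinalMap {P Q : Type*} [Preorder P] [Preorder Q] (f : P → Q) : Prop :=
  ∀ X : Set P, TCofinal X → TCofinal (f '' X)

/-- `P ≤_T Q`: there is a cofinal map from `Q` to `P`. -/
def TukeyLE (P Q : Type*) [Preorder P] [Preorder Q] : Prop :=
  ∃ f : Q → P, TCofinalMap f

/-- Tukey equivalence. -/
def TukeyEquiv (P Q : Type*) [Preorder P] [Preorder Q] : Prop :=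
  TukeyLE P Q ∧ TukeyLE Q P

/-- An ultrafilter on a Boolean algebra `B` of subsets of `X` (a field of sets):
a subset of `B` omitting `∅`, closed under intersection, upward closed in `B`, and
containing `s` or `sᶜ` for each `s ∈ B`; regarded as the partial order `(U,⊇)`. -/
structure SetUltrafilter {X : Type*} (B : Set (Set X)) where
  carrier : Set (Set X)
  subset_alg : carrier ⊆ B
  empty_not_mem : ∅ ∉ carrier
  inter_mem : ∀ a ∈ carrier, ∀ b ∈ carrier, a ∩ b ∈ carrier
  up_closed : ∀ a ∈ carrier, ∀ b ∈ B, a ⊆ b → b ∈ carrier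
  mem_or_compl_mem : ∀ b ∈ B, b ∈ carrier ∨ bᶜ ∈ carrier

/-- The Boolean subalgebra of the powerset algebra of `X` generated by a family `G`. -/
def genBoolAlg {X : Type*} (G : Set (Set X)) : Set (Set X) :=
  ⋂₀ {B : Set (Set X) | G ⊆ B ∧ ∅ ∈ B ∧ (∀ s ∈ B, sᶜ ∈ B) ∧ (∀ s ∈ B, ∀ t ∈ B, s ∩ t ∈ B)}

/-- The interval algebra of a linear order `L`: the subalgebra of the powerset algebra
generated by the half-lines `[a,→)`. -/
def intalg (L : Type*) [LinearOrder L] : Set (Set L) :=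
  genBoolAlg {s : Set L | ∃ a : L, s = Set.Ici a}

/-- The cofinality of a subset `C` of a preorder: the least cardinality of a cofinal
subset of `C`. -/
noncomputable def setCof {L : Type*} [Preorder L] (C : Set L) : Cardinal :=
  sInf {c : Cardinal | ∃ D : Set L, D ⊆ C ∧ c = #↥D ∧ ∀ x ∈ C, ∃ y ∈ D, x ≤ y}

/-- The coinitiality of a subset `X` of a preorder: the least cardinality of a coinitial
subset of `X`, with the convention that the coinitiality of `∅` is `1`. -/
noncomputable def setCoi {L : Type*} [Preorder L] (X : Set L) : Cardinal :=
  if X = ∅ then 1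
  else sInf {c : Cardinal | ∃ D : Set L, D ⊆ X ∧ c = #↥D ∧ ∀ x ∈ X, ∃ y ∈ D, y ≤ x}

section Tukey
variable {P Q : Type*} [Preorder P] [Preorder Q]

theorem tcofinalMap_of_monotone {f : Q → P} (hf : Monotone f)
    (hr : ∀ p : P, ∃ q : Q, p ≤ f q) : TCofinalMap f := by
  intro X hX p
  obtain ⟨q, hq⟩ := hr p
  obtain ⟨x, hxX, hqx⟩ := hX q
  exact ⟨f x, ⟨x, hxX, rfl⟩, hq.trans (hf hqx)⟩

theorem tukeyLE_of_unbounded_map {g : P → Q}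
    (H : ∀ q : Q, ∃ b : P, ∀ p : P, g p ≤ q → p ≤ b) : TukeyLE P Q := by
  refine ⟨fun q => (H q).choose, ?_⟩
  intro X hX p
  obtain ⟨x, hxX, hgx⟩ := hX (g p)
  exact ⟨_, ⟨x, hxX, rfl⟩, (H x).choose_spec p hgx⟩

end Tukey

section Gen
variable {X : Type*} {G : Set (Set X)} {s t : Set X}

theorem genBoolAlg_mem (hs : s ∈ G) : s ∈ genBoolAlg G :=
  fun _B hB => hB.1 hs

theorem genBoolAlg_empty : ∅ ∈ genBoolAlg G :=
  fun _B hB => hB.2.1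

theorem genBoolAlg_compl (hs : s ∈ genBoolAlg G) : sᶜ ∈ genBoolAlg G :=
  fun B hB => hB.2.2.1 s (hs B hB)

theorem genBoolAlg_inter (hs : s ∈ genBoolAlg G) (ht : t ∈ genBoolAlg G) :
    s ∩ t ∈ genBoolAlg G :=
  fun B hB => hB.2.2.2 s (hs B hB) t (ht B hB)

theorem genBoolAlg_induction (P : Set X → Prop) (hG : ∀ s ∈ G, P s) (h0 : P ∅)
    (hc : ∀ s, P s → P sᶜ) (hi : ∀ s, P s → ∀ t, P t → P (s ∩ t)) :
    ∀ s ∈ genBoolAlg G, P s :=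
  fun s hs => hs {u | P u} ⟨hG, h0, hc, hi⟩

end Gen

section Intalg
variable {L : Type*} [LinearOrder L]

theorem Ici_mem_intalg (a : L) : Set.Ici a ∈ intalg L :=
  genBoolAlg_mem ⟨a, rfl⟩

theorem Iio_mem_intalg (a : L) : Set.Iio a ∈ intalg L := by
  rw [← Set.compl_Ici]; exact genBoolAlg_compl (Ici_mem_intalg a)

theorem Ico_mem_intalg (a b : L) : Set.Ico a b ∈ intalg L := by
  rw [← Set.Ici_inter_Iio]; exact genBoolAlg_inter (Ici_mem_intalg a) (Iio_mem_intalg b)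

theorem univ_mem_intalg : Set.univ ∈ intalg L := by
  rw [← Set.compl_empty]; exact genBoolAlg_compl genBoolAlg_empty

end Intalg

section Cof
variable {L : Type*} [LinearOrder L]

theorem setCof_spec (C : Set L) (hC : C.Nonempty) :
    ∃ D : Set L, D ⊆ C ∧ setCof C = #↥D ∧ ∀ x ∈ C, ∃ y ∈ D, x ≤ y :=
  csInf_mem (s := {c : Cardinal | ∃ D : Set L, D ⊆ C ∧ c = #↥D ∧ ∀ x ∈ C, ∃ y ∈ D, x ≤ y})
    ⟨#↥C, C, subset_rfl, rfl, fun x hx => ⟨x, hx, le_rfl⟩⟩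

theorem setCof_le {C D : Set L} (hD : D ⊆ C) (hcof : ∀ x ∈ C, ∃ y ∈ D, x ≤ y) :
    setCof C ≤ #↥D :=
  csInf_le (OrderBot.bddBelow _) ⟨D, hD, rfl, hcof⟩

theorem exists_above_of_small {C S : Set L} (hS : S ⊆ C) (h : #↥S < setCof C) :
    ∃ c ∈ C, ∀ x ∈ S, x < c := by
  by_contra hcon
  push_neg at hcon
  have : setCof C ≤ #↥S := setCof_le hS (fun x hx => by
    obtain ⟨y, hyS, hy⟩ := hcon x hx
    exact ⟨y, hyS, hy⟩)
  exact absurd h (not_lt.mpr this)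

theorem exists_cof_fun (C : Set L) (hC : C.Nonempty) :
    ∃ f : (setCof C).ord.ToType → L,
      StrictMono f ∧ (∀ α, f α ∈ C) ∧ ∀ c ∈ C, ∃ α, c ≤ f α := by
  classical
  obtain ⟨D, hDC, hcard, hDcof⟩ := setCof_spec C hC
  have hmk : #(setCof C).ord.ToType = #↥D := by rw [Cardinal.mk_ord_toType, hcard]
  obtain ⟨e⟩ := Cardinal.eq.1 hmk
  have hsmall : ∀ (α : (setCof C).ord.ToType) (IH : ∀ β, β < α → L),
      ∃ c ∈ C, ∀ x ∈ {x | x ∈ C ∧ ∃ β, ∃ h : β < α, x = IH β h}, x < c := by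
    intro α IH
    apply exists_above_of_small (fun x hx => hx.1)
    refine lt_of_le_of_lt ?_ (Cardinal.mk_Iio_ord_toType α)
    have hsub : {x | x ∈ C ∧ ∃ β, ∃ h : β < α, x = IH β h} ⊆
        Set.range (fun β : Set.Iio α => IH β.1 β.2) := by
      rintro x ⟨-, β, h, rfl⟩
      exact ⟨⟨β, h⟩, rfl⟩
    exact le_trans (Cardinal.mk_le_mk_of_subset hsub) (Cardinal.mk_range_le)
  have wf : WellFounded ((· < ·) : (setCof C).ord.ToType → (setCof C).ord.ToType → Prop) :=
    IsWellFounded.wf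
  set G : ∀ α : (setCof C).ord.ToType, (∀ β, β < α → L) → L :=
    fun α IH => max (e α : L) (hsmall α IH).choose with hG
  have hFeq : ∀ α, wf.fix G α = G α (fun β _ => wf.fix G β) := fun α => wf.fix_eq G α
  have hmemC : ∀ α, wf.fix G α ∈ C := by
    intro α
    rw [hFeq α, hG]
    rcases max_choice (e α : L) (hsmall α (fun β _ => wf.fix G β)).choose with h | h <;>
      simp only [] at h ⊢ <;> rw [h]
    · exact hDC (e α).2
    · exact (hsmall α (fun β _ => wf.fix G β)).choose_spec.1
  have hlt : ∀ β α, β < α → wf.fix G β < wf.fix G α := by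
    intro β α h
    have hx := (hsmall α (fun β _ => wf.fix G β)).choose_spec.2 (wf.fix G β)
      ⟨hmemC β, β, h, rfl⟩
    rw [hFeq α]
    exact lt_of_lt_of_le hx (le_max_right _ _)
  refine ⟨wf.fix G, fun β α h => hlt β α h, hmemC, ?_⟩
  intro c hc
  obtain ⟨d, hdD, hcd⟩ := hDcof c hc
  refine ⟨e.symm ⟨d, hdD⟩, ?_⟩
  have he : (e (e.symm ⟨d, hdD⟩) : L) = d := by rw [e.apply_symm_apply]
  rw [hFeq]
  exact le_trans (hcd.trans he.ge) (le_max_left _ _)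

end Cof

section Coi
variable {L : Type*} [LinearOrder L]

theorem setCoi_eq_dual (X : Set L) (hX : X.Nonempty) :
    setCoi X = setCof (L := Lᵒᵈ) X := by
  rw [setCoi, if_neg (Set.nonempty_iff_ne_empty.mp hX)]
  rfl

theorem exists_coi_fun (X : Set L) (hX : X.Nonempty) :
    ∃ g : (setCoi X).ord.ToType → L,
      (∀ ⦃β β'⦄, β < β' → g β' < g β) ∧ (∀ β, g β ∈ X) ∧ ∀ x ∈ X, ∃ β, g β ≤ x := by
  rw [setCoi_eq_dual X hX]
  obtain ⟨f, hmono, hmem, hcof⟩ := exists_cof_fun (L := Lᵒᵈ) X hX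
  exact ⟨f, fun β β' h => hmono h, hmem, hcof⟩

end Coi

section Key
variable {L : Type*} [LinearOrder L] [OrderBot L]

theorem key1 : ∀ s ∈ intalg L, ∃ a : L, Set.Ici a ⊆ s ∨ Set.Ici a ⊆ sᶜ := by
  apply genBoolAlg_induction
  · rintro s ⟨a, rfl⟩
    exact ⟨a, Or.inl subset_rfl⟩
  · exact ⟨⊥, Or.inr (by simp)⟩
  · rintro s ⟨a, h | h⟩
    · exact ⟨a, Or.inr (by rwa [compl_compl])⟩
    · exact ⟨a, Or.inl h⟩
  · rintro s hs t ht
    obtain ⟨a, ha⟩ := hs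
    obtain ⟨b, hb⟩ := ht
    rcases ha with ha | ha
    · rcases hb with hb | hb
      · refine ⟨max a b, Or.inl fun x hx => ⟨ha (le_trans (le_max_left a b) hx),
          hb (le_trans (le_max_right a b) hx)⟩⟩
      · exact ⟨b, Or.inr fun x hx hmem => hb hx hmem.2⟩
    · exact ⟨a, Or.inr fun x hx hmem => ha hx hmem.1⟩

theorem key2 {C : Set L} (hbot : ⊥ ∈ C) (hlow : IsLowerSet C) (hcc : Cᶜ.Nonempty) :
    ∀ s ∈ intalg L, ∃ a ∈ C, ∃ b ∈ Cᶜ, Set.Ico a b ⊆ s ∨ Set.Ico a b ⊆ sᶜ := by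
  obtain ⟨b₀, hb₀⟩ := hcc
  apply genBoolAlg_induction
  · rintro s ⟨t, rfl⟩
    by_cases ht : t ∈ C
    · exact ⟨t, ht, b₀, hb₀, Or.inl fun x hx => hx.1⟩
    · refine ⟨⊥, hbot, t, ht, Or.inr fun x hx (hx' : t ≤ x) => absurd hx.2 (not_lt.mpr hx')⟩
  · exact ⟨⊥, hbot, b₀, hb₀, Or.inr fun x _ h => h⟩
  · rintro s ⟨a, ha, b, hb, h | h⟩
    · exact ⟨a, ha, b, hb, Or.inr (by rwa [compl_compl])⟩
    · exact ⟨a, ha, b, hb, Or.inl h⟩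
  · rintro s hs t ht
    obtain ⟨a, ha, b, hb, hab⟩ := hs
    obtain ⟨a', ha', b', hb', hab'⟩ := ht
    rcases hab with hab | hab
    · rcases hab' with hab' | hab'
      · refine ⟨max a a', ?_, min b b', ?_, Or.inl fun x hx => ?_⟩
        · rcases max_choice a a' with h | h <;> rw [h] <;> assumption
        · rcases min_choice b b' with h | h <;> rw [h] <;> assumption
        · exact ⟨hab ⟨le_trans (le_max_left a a') hx.1, lt_of_lt_of_le hx.2 (min_le_left b b')⟩,
            hab' ⟨le_trans (le_max_right a a') hx.1, lt_of_lt_of_le hx.2 (min_le_right b b')⟩⟩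
      · exact ⟨a', ha', b', hb', Or.inr fun x hx hmem => hab' hx hmem.2⟩
    · exact ⟨a, ha, b, hb, Or.inr fun x hx hmem => hab hx hmem.1⟩

end Key

theorem main_part1 {L : Type*} [LinearOrder L] [OrderBot L] (U : SetUltrafilter (intalg L)) :
    TukeyEquiv ((↥U.carrier)ᵒᵈ)
      ((setCof {t : L | Set.Ici t ∈ U.carrier}).ord.ToType ×
        (setCoi ({t : L | Set.Ici t ∈ U.carrier}ᶜ)).ord.ToType) := by
  classical
  set C : Set L := {t : L | Set.Ici t ∈ U.carrier} with hCdef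
  have huniv : Set.univ ∈ U.carrier := by
    rcases U.mem_or_compl_mem _ univ_mem_intalg with h | h
    · exact h
    · rw [Set.compl_univ] at h; exact absurd h U.empty_not_mem
  have hbot : ⊥ ∈ C := by show Set.Ici ⊥ ∈ U.carrier; rw [Set.Ici_bot]; exact huniv
  have hCne : C.Nonempty := ⟨⊥, hbot⟩
  have hlow : IsLowerSet C := fun a b hba ha =>
    U.up_closed (Set.Ici a) ha (Set.Ici b) (Ici_mem_intalg b) (Set.Ici_subset_Ici.mpr hba)
  have hIco_mem : ∀ {a b : L}, a ∈ C → b ∈ Cᶜ → Set.Ico a b ∈ U.carrier := by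
    intro a b ha hb
    have h2 : Set.Iio b ∈ U.carrier := by
      rcases U.mem_or_compl_mem _ (Ici_mem_intalg b) with h | h
      · exact absurd h hb
      · rwa [Set.compl_Ici] at h
    have := U.inter_mem _ ha _ h2
    rwa [Set.Ici_inter_Iio] at this
  have hltCC : ∀ {a b : L}, a ∈ C → b ∈ Cᶜ → a < b := fun ha hb =>
    lt_of_not_ge fun h => hb (hlow h ha)
  by_cases hcc : Cᶜ = (∅ : Set L)
  · -- case C = univ
    have hCuniv : C = Set.univ := by rwa [Set.compl_empty_iff] at hcc
    have hmemC : ∀ t : L, t ∈ C := fun t => by rw [hCuniv]; trivial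
    have hcontain : ∀ u ∈ U.carrier, ∃ a : L, Set.Ici a ⊆ u := by
      intro u hu
      obtain ⟨a, h | h⟩ := key1 u (U.subset_alg hu)
      · exact ⟨a, h⟩
      · exfalso
        have haU : Set.Ici a ∈ U.carrier := hmemC a
        have hemp : u ∩ Set.Ici a = ∅ :=
          Set.eq_empty_iff_forall_notMem.mpr fun x hx => h hx.2 hx.1
        exact U.empty_not_mem (hemp ▸ U.inter_mem _ hu _ haU)
    obtain ⟨f, hf_mono, hf_mem, hf_cof⟩ := exists_cof_fun C hCne
    have hμ1 : setCoi (Cᶜ) = 1 := by rw [hcc, setCoi, if_pos rfl]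
    have hne : Nonempty (setCoi (Cᶜ)).ord.ToType := by
      refine Cardinal.mk_ne_zero_iff.mp ?_
      rw [Cardinal.mk_ord_toType, hμ1]; exact one_ne_zero
    have hsub : Subsingleton (setCoi (Cᶜ)).ord.ToType := by
      refine Cardinal.le_one_iff_subsingleton.mp ?_
      rw [Cardinal.mk_ord_toType, hμ1]
    refine ⟨⟨fun p => OrderDual.toDual ⟨Set.Ici (f p.1), hf_mem p.1⟩,
        tcofinalMap_of_monotone ?_ ?_⟩, ?_⟩
    · intro p q hpq
      show Set.Ici (f q.1) ⊆ Set.Ici (f p.1)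
      exact Set.Ici_subset_Ici.mpr (hf_mono.monotone hpq.1)
    · intro u
      obtain ⟨a, hau⟩ := hcontain (OrderDual.ofDual u).1 (OrderDual.ofDual u).2
      obtain ⟨α, hα⟩ := hf_cof a (hmemC a)
      obtain ⟨β⟩ := hne
      refine ⟨(α, β), ?_⟩
      show Set.Ici (f α) ⊆ (OrderDual.ofDual u).1
      exact subset_trans (Set.Ici_subset_Ici.mpr hα) hau
    · refine tukeyLE_of_unbounded_map
        (g := fun p => OrderDual.toDual ⟨Set.Ici (f p.1), hf_mem p.1⟩) ?_
      intro u
      obtain ⟨a, hau⟩ := hcontain (OrderDual.ofDual u).1 (OrderDual.ofDual u).2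
      obtain ⟨α₀, hα₀⟩ := hf_cof a (hmemC a)
      obtain ⟨β₀⟩ := hne
      refine ⟨(α₀, β₀), ?_⟩
      intro p hp
      have hp' : (OrderDual.ofDual u).1 ⊆ Set.Ici (f p.1) := hp
      have h1 : f p.1 ≤ a := hp' (hau (Set.self_mem_Ici))
      refine Prod.le_def.mpr ⟨?_, ?_⟩
      · exact hf_mono.le_iff_le.mp (h1.trans hα₀)
      · exact le_of_eq (Subsingleton.elim _ _)
  · -- case Cᶜ nonempty
    have hccne : Cᶜ.Nonempty := Set.nonempty_iff_ne_empty.mpr hcc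
    have hcontain : ∀ u ∈ U.carrier, ∃ a ∈ C, ∃ b ∈ Cᶜ, Set.Ico a b ⊆ u := by
      intro u hu
      obtain ⟨a, ha, b, hb, h | h⟩ := key2 hbot hlow hccne u (U.subset_alg hu)
      · exact ⟨a, ha, b, hb, h⟩
      · exfalso
        have hemp : u ∩ Set.Ico a b = ∅ :=
          Set.eq_empty_iff_forall_notMem.mpr fun x hx => h hx.2 hx.1
        exact U.empty_not_mem (hemp ▸ U.inter_mem _ hu _ (hIco_mem ha hb))
    obtain ⟨f, hf_mono, hf_mem, hf_cof⟩ := exists_cof_fun C hCne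
    obtain ⟨g, hg_anti, hg_mem, hg_coi⟩ := exists_coi_fun (Cᶜ) hccne
    have hg_antitone : ∀ ⦃β β'⦄, β ≤ β' → g β' ≤ g β := by
      intro β β' h
      rcases eq_or_lt_of_le h with h | h
      · rw [h]
      · exact (hg_anti h).le
    refine ⟨⟨fun p => OrderDual.toDual ⟨Set.Ico (f p.1) (g p.2), hIco_mem (hf_mem p.1) (hg_mem p.2)⟩,
        tcofinalMap_of_monotone ?_ ?_⟩, ?_⟩
    · intro p q hpq
      show Set.Ico (f q.1) (g q.2) ⊆ Set.Ico (f p.1) (g p.2)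
      intro x hx
      exact ⟨le_trans (hf_mono.monotone hpq.1) hx.1, lt_of_lt_of_le hx.2 (hg_antitone hpq.2)⟩
    · intro u
      obtain ⟨a, ha, b, hb, hau⟩ := hcontain (OrderDual.ofDual u).1 (OrderDual.ofDual u).2
      obtain ⟨α, hα⟩ := hf_cof a ha
      obtain ⟨β, hβ⟩ := hg_coi b hb
      refine ⟨(α, β), ?_⟩
      show Set.Ico (f α) (g β) ⊆ (OrderDual.ofDual u).1
      intro x hx
      exact hau ⟨le_trans hα hx.1, lt_of_lt_of_le hx.2 hβ⟩
    · refine tukeyLE_of_unbounded_map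
        (g := fun p => OrderDual.toDual
          ⟨Set.Ico (f p.1) (g p.2), hIco_mem (hf_mem p.1) (hg_mem p.2)⟩) ?_
      intro u
      obtain ⟨a, ha, b, hb, hau⟩ := hcontain (OrderDual.ofDual u).1 (OrderDual.ofDual u).2
      obtain ⟨α₀, hα₀⟩ := hf_cof a ha
      obtain ⟨β₀, hβ₀⟩ := hg_coi b hb
      refine ⟨(α₀, β₀), ?_⟩
      intro p hp
      have hp' : (OrderDual.ofDual u).1 ⊆ Set.Ico (f p.1) (g p.2) := hp
      have hmemab : a ∈ Set.Ico (f p.1) (g p.2) := hp' (hau ⟨le_rfl, hltCC ha hb⟩)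
      have h1 : f p.1 ≤ a := hmemab.1
      have h2 : b ≤ g p.2 := by
        by_contra hcon
        push_neg at hcon
        have : g p.2 ∈ Set.Ico a b := ⟨hmemab.2.le, hcon⟩
        exact absurd (hp' (hau this)).2 (lt_irrefl _)
      refine Prod.le_def.mpr ⟨?_, ?_⟩
      · exact hf_mono.le_iff_le.mp (h1.trans hα₀)
      · by_contra hcon
        push_neg at hcon
        exact absurd (lt_of_lt_of_le (hg_anti hcon) (hβ₀.trans h2)) (lt_irrefl _)

theorem main_part2 {L : Type*} [LinearOrder L] [OrderBot L] (C : Set L) (hCne : C.Nonempty)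
    (hlow : IsLowerSet C) :
    ∃ U : SetUltrafilter (intalg L), {t : L | Set.Ici t ∈ U.carrier} = C := by
  classical
  have hbot : ⊥ ∈ C := hlow bot_le hCne.choose_spec
  have hltCC : ∀ {a b : L}, a ∈ C → b ∈ Cᶜ → a < b := fun ha hb =>
    lt_of_not_ge fun h => hb (hlow h ha)
  refine ⟨⟨{s | s ∈ intalg L ∧ ((∃ a ∈ C, Set.Ici a ⊆ s) ∨ ∃ a ∈ C, ∃ b ∈ Cᶜ, Set.Ico a b ⊆ s)},
      fun s hs => hs.1, ?_, ?_, ?_, ?_⟩, ?_⟩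
  · rintro ⟨-, ⟨a, ha, h⟩ | ⟨a, ha, b, hb, h⟩⟩
    · exact h Set.self_mem_Ici
    · exact h ⟨le_rfl, hltCC ha hb⟩
  · rintro s ⟨hs, h1⟩ t ⟨ht, h2⟩
    refine ⟨genBoolAlg_inter hs ht, ?_⟩
    rcases h1 with ⟨a, ha, h1⟩ | ⟨a, ha, b, hb, h1⟩ <;>
      rcases h2 with ⟨a', ha', h2⟩ | ⟨a', ha', b', hb', h2⟩
    · left
      refine ⟨max a a', ?_, fun x hx =>
        ⟨h1 (le_trans (le_max_left _ _) hx), h2 (le_trans (le_max_right _ _) hx)⟩⟩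
      rcases max_choice a a' with h | h <;> rw [h] <;> assumption
    · right
      refine ⟨max a a', ?_, b', hb', fun x hx =>
        ⟨h1 (le_trans (le_max_left _ _) hx.1), h2 ⟨le_trans (le_max_right _ _) hx.1, hx.2⟩⟩⟩
      rcases max_choice a a' with h | h <;> rw [h] <;> assumption
    · right
      refine ⟨max a a', ?_, b, hb, fun x hx =>
        ⟨h1 ⟨le_trans (le_max_left _ _) hx.1, hx.2⟩, h2 (le_trans (le_max_right _ _) hx.1)⟩⟩
      rcases max_choice a a' with h | h <;> rw [h] <;> assumption
    · right
      refine ⟨max a a', ?_, min b b', ?_, fun x hx =>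
        ⟨h1 ⟨le_trans (le_max_left _ _) hx.1, lt_of_lt_of_le hx.2 (min_le_left _ _)⟩,
         h2 ⟨le_trans (le_max_right _ _) hx.1, lt_of_lt_of_le hx.2 (min_le_right _ _)⟩⟩⟩
      · rcases max_choice a a' with h | h <;> rw [h] <;> assumption
      · rcases min_choice b b' with h | h <;> rw [h] <;> assumption
  · rintro s ⟨hs, h⟩ t ht hst
    refine ⟨ht, ?_⟩
    rcases h with ⟨a, ha, h⟩ | ⟨a, ha, b, hb, h⟩
    · exact Or.inl ⟨a, ha, h.trans hst⟩
    · exact Or.inr ⟨a, ha, b, hb, h.trans hst⟩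
  · intro s hs
    by_cases hcc : Cᶜ = (∅ : Set L)
    · have hCuniv : C = Set.univ := by rwa [Set.compl_empty_iff] at hcc
      obtain ⟨a, h | h⟩ := key1 s hs
      · exact Or.inl ⟨hs, Or.inl ⟨a, by rw [hCuniv]; trivial, h⟩⟩
      · exact Or.inr ⟨genBoolAlg_compl hs, Or.inl ⟨a, by rw [hCuniv]; trivial, h⟩⟩
    · obtain ⟨a, ha, b, hb, h | h⟩ := key2 hbot hlow (Set.nonempty_iff_ne_empty.mpr hcc) s hs
      · exact Or.inl ⟨hs, Or.inr ⟨a, ha, b, hb, h⟩⟩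
      · exact Or.inr ⟨genBoolAlg_compl hs, Or.inr ⟨a, ha, b, hb, h⟩⟩
  · ext t
    simp only [Set.mem_setOf_eq]
    constructor
    · rintro ⟨-, ⟨a, ha, h⟩ | ⟨a, ha, b, hb, h⟩⟩
      · exact hlow (Set.mem_Ici.mp (h Set.self_mem_Ici)) ha
      · exact hlow (Set.mem_Ici.mp (h ⟨le_rfl, hltCC ha hb⟩)) ha
    · intro ht
      exact ⟨Ici_mem_intalg t, Or.inl ⟨t, ht, subset_rfl⟩⟩


/-- For a linear order `L` with a least element:
(i) every ultrafilter `U` on `Intalg L`, with corresponding initial chain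
`C = {t : [t,→) ∈ U}`, satisfies `(U,⊇) ≡_T (cf C × ci(L∖C), ≤)`; and
(ii) for every initial chain `C ⊆ L` there is an ultrafilter realizing that type.
Cardinals carry their ordinal order and the product is ordered coordinatewise. -/
theorem stmt9 {L : Type*} [LinearOrder L] [OrderBot L] :
    (∀ U : SetUltrafilter (intalg L),
      TukeyEquiv ((↥U.carrier)ᵒᵈ)
        ((setCof {t : L | Set.Ici t ∈ U.carrier}).ord.ToType ×
          (setCoi ({t : L | Set.Ici t ∈ U.carrier}ᶜ)).ord.ToType)) ∧
    (∀ C : Set L, C.Nonempty → IsLowerSet C →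
      ∃ U : SetUltrafilter (intalg L),
        TukeyEquiv ((↥U.carrier)ᵒᵈ)
          ((setCof C).ord.ToType × (setCoi Cᶜ).ord.ToType)) := by
  refine ⟨main_part1, ?_⟩
  intro C hCne hlow
  obtain ⟨U, hU⟩ := main_part2 C hCne hlow
  refine ⟨U, ?_⟩
  have := main_part1 U
  rwa [hU] at this
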